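/- For φ, β ∈ ℝ and Σ_1, Σ_2 > 0, defining ν_{φ,β}(z, Σ_1, Σ_2) = (1/√(2πΣ_2)) ∫_{-∞}^{+∞} ν(φx + β, Σ_1) exp(-(x - z + Σ_2/2)^2/(2Σ_2)) dx, one has ν_{φ,β}(z, Σ_1, Σ_2) = ν(φz + β + ((φ^2 - φ)/2)Σ_2, Σ_1 + φ^2 Σ_2). -/

import Mathlib

open MeasureTheory

/-- Gaussian smoothing of the payoff `f` in log-coordinates. -/
noncomputable def nu (f : ℝ → ℝ) (z s : ℝ) : ℝ :=
  (Real.sqrt (2 * Real.pi * s))⁻¹ *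
    ∫ x : ℝ, f (Real.exp x) * Real.exp (-(x - z + s/2)^2 / (2*s))

/- Auxiliary lemma: translated Gaussian integral with a constant in the exponent. -/
lemma nu_aux_gauss_integral {p : ℝ} (hp : 0 < p) (c r : ℝ) :
    ∫ x : ℝ, Real.exp (-(p * (x - c) ^ 2 + r)) = Real.sqrt (Real.pi / p) * Real.exp (-r) := by
  have h : ∀ x : ℝ, Real.exp (-(p * (x - c) ^ 2 + r))
      = Real.exp (-p * (x - c) ^ 2) * Real.exp (-r) := by
    intro x; rw [← Real.exp_add]; ring_nf
  simp_rw [h]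
  rw [integral_mul_const]
  congr 1
  rw [show (∫ x : ℝ, Real.exp (-p * (x - c) ^ 2))
      = ∫ x : ℝ, Real.exp (-p * x ^ 2) from
    integral_sub_right_eq_self (fun t : ℝ => Real.exp (-p * t ^ 2)) c]
  exact integral_gaussian p

/- Auxiliary lemma: polynomial times Gaussian is integrable. -/
lemma nu_aux_poly_gauss {b : ℝ} (hb : 0 < b) (k : ℕ) :
    Integrable (fun y : ℝ => (1 + |y|) ^ k * Real.exp (-b * y ^ 2)) := by
  apply Integrable.mono'
    ((integrable_exp_neg_mul_sq (by linarith : (0:ℝ) < b/2)).const_mul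
      (Real.exp ((k:ℝ)^2 / (2*b))))
  · apply Measurable.aestronglyMeasurable
    fun_prop
  · filter_upwards with y
    have h0 : (0:ℝ) ≤ (1 + |y|)^k * Real.exp (-b*y^2) := by positivity
    rw [Real.norm_of_nonneg h0]
    have h1 : (1 + |y|) ^ k ≤ Real.exp ((k:ℝ) * |y|) := by
      calc (1 + |y|)^k ≤ (Real.exp |y|)^k := by
            apply pow_le_pow_left₀ (by positivity)
            linarith [Real.add_one_le_exp |y|]
        _ = Real.exp ((k:ℝ) * |y|) := (Real.exp_nat_mul _ k).symm
    calc (1+|y|)^k * Real.exp (-b*y^2)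
        ≤ Real.exp ((k:ℝ)*|y|) * Real.exp (-b*y^2) :=
          mul_le_mul_of_nonneg_right h1 (Real.exp_pos _).le
      _ = Real.exp ((k:ℝ)*|y| + -b*y^2) := (Real.exp_add _ _).symm
      _ ≤ Real.exp ((k:ℝ)^2/(2*b) + (-(b/2) * y^2)) := by
          apply Real.exp_le_exp.2
          rw [← sub_nonneg]
          have h4 : ((k:ℝ) - b*|y|)^2 = (k:ℝ)^2 - 2*(k:ℝ)*b*|y| + b^2*y^2 := by
            linear_combination (b^2) * sq_abs y
          have h : (k:ℝ)^2/(2*b) + (-(b/2)*y^2) - ((k:ℝ)*|y| + -b*y^2)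
              = ((k:ℝ) - b*|y|)^2/(2*b) := by
            rw [h4]; field_simp; ring
          rw [h]; positivity
      _ = Real.exp ((k:ℝ)^2/(2*b)) * Real.exp (-(b/2)*y^2) := Real.exp_add _ _

/- Auxiliary lemma: quadratic domination bound. -/
lemma nu_aux_quad (φ s₁ s₂ ε c d y x : ℝ) (h1 : 0 < s₁) (h2 : 0 < s₂) (hε : 0 < ε)
    (hε1 : ε ≤ 1/(4*s₁)) (hε2 : ε ≤ 1/(4*s₂*(1+4*φ^2))) :
    ε*x^2 + ε*y^2 ≤ (y - φ*x - c)^2/(2*s₁) + (x - d)^2/(2*s₂)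
      + ε*(4*c^2 + 2*(1+4*φ^2)*d^2) := by
  have hφ : (0:ℝ) < 1 + 4*φ^2 := by positivity
  have halg : x^2 + y^2 ≤ 2*(y - φ*x - c)^2 + (1+4*φ^2)*(2*(x-d)^2 + 2*d^2) + 4*c^2 := by
    nlinarith [sq_nonneg (y - 2*φ*x - 2*c), sq_nonneg (φ*x - c), sq_nonneg (x - 2*d),
      sq_nonneg (φ*(x - 2*d))]
  have hA : ε*x^2 + ε*y^2 ≤ 2*ε*(y - φ*x - c)^2 + 2*ε*(1+4*φ^2)*(x-d)^2
      + ε*(4*c^2 + 2*(1+4*φ^2)*d^2) := by nlinarith [mul_le_mul_of_nonneg_left halg hε.le]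
  have hB : 2*ε*(y - φ*x - c)^2 ≤ (y - φ*x - c)^2/(2*s₁) := by
    have h : 2*ε ≤ 1/(2*s₁) := by
      have : 2*(1/(4*s₁)) = 1/(2*s₁) := by ring
      linarith
    have h' := mul_le_mul_of_nonneg_right h (sq_nonneg (y - φ*x - c))
    have heq : (1/(2*s₁))*(y - φ*x - c)^2 = (y - φ*x - c)^2/(2*s₁) := by ring
    linarith [h']
  have hC : 2*ε*(1+4*φ^2)*(x-d)^2 ≤ (x-d)^2/(2*s₂) := by
    have h : 2*ε*(1+4*φ^2) ≤ 1/(2*s₂) := by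
      have h5 : 2*(1/(4*s₂*(1+4*φ^2)))*(1+4*φ^2) = 1/(2*s₂) := by
        field_simp; ring
      have h6 := mul_le_mul_of_nonneg_right hε2 (by positivity : (0:ℝ) ≤ 2*(1+4*φ^2))
      calc 2*ε*(1+4*φ^2) = ε * (2*(1+4*φ^2)) := by ring
        _ ≤ (1/(4*s₂*(1+4*φ^2))) * (2*(1+4*φ^2)) := h6
        _ = 1/(2*s₂) := by rw [← h5]; ring
    have h' := mul_le_mul_of_nonneg_right h (sq_nonneg (x - d))
    have heq : (1/(2*s₂))*(x - d)^2 = (x - d)^2/(2*s₂) := by ring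
    linarith [h']
  linarith

/-- The affinely-transformed Gaussian smoothing `ν_{φ,β}` collapses to a single `ν`:
`ν_{φ,β}(z, Σ₁, Σ₂) = ν(φz + β + ((φ²-φ)/2)Σ₂, Σ₁ + φ²Σ₂)`. -/
theorem nu_phi_beta (f : ℝ → ℝ) (hf : Measurable f)
    (hgrowth : ∃ C : ℝ, ∃ k : ℕ, ∀ x : ℝ, |f (Real.exp x)| ≤ C * (1 + |x|)^k)
    (φ β z s₁ s₂ : ℝ) (h1 : 0 < s₁) (h2 : 0 < s₂) :
    (Real.sqrt (2 * Real.pi * s₂))⁻¹ *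
        (∫ x : ℝ, nu f (φ*x + β) s₁ * Real.exp (-(x - z + s₂/2)^2 / (2*s₂)))
      = nu f (φ*z + β + (φ^2 - φ)/2 * s₂) (s₁ + φ^2 * s₂) := by
  obtain ⟨C, k, hCk⟩ := hgrowth
  have hC0 : 0 ≤ C := le_trans (abs_nonneg _) (by simpa using hCk 0)
  have hS : (0:ℝ) < s₁ + φ^2 * s₂ := by positivity
  have hπ := Real.pi_pos
  -- the two Gaussian kernels
  set E₁ : ℝ → ℝ → ℝ := fun x y => Real.exp (-(y - (φ*x + β) + s₁/2)^2 / (2*s₁)) with hE₁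
  set E₂ : ℝ → ℝ := fun x => Real.exp (-(x - z + s₂/2)^2 / (2*s₂)) with hE₂
  -- inner Gaussian convolution identity
  have hinner : ∀ y : ℝ,
      (∫ x : ℝ, E₁ x y * E₂ x)
        = Real.sqrt (2*Real.pi*s₁*s₂ / (s₁ + φ^2*s₂)) *
          Real.exp (-(y - (φ*z + β + (φ^2 - φ)/2 * s₂) + (s₁ + φ^2*s₂)/2)^2
            / (2*(s₁ + φ^2*s₂))) := by
    intro y
    have hp : 0 < (s₁ + φ^2*s₂) / (2*s₁*s₂) := by positivity
    have key : ∀ x : ℝ, E₁ x y * E₂ x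
        = Real.exp (-((((s₁ + φ^2*s₂))/(2*s₁*s₂)) *
            (x - ((y - β + s₁/2)*φ*s₂ + (z - s₂/2)*s₁)/(s₁ + φ^2*s₂))^2
          + (y - β + s₁/2 - φ*(z - s₂/2))^2/(2*(s₁ + φ^2*s₂)))) := by
      intro x
      rw [hE₁, hE₂, ← Real.exp_add]
      congr 1
      field_simp
      ring
    simp_rw [key]
    rw [nu_aux_gauss_integral hp]
    congr 2
    · rw [eq_div_iff (by positivity : (s₁ + φ^2*s₂) ≠ 0)]
      field_simp
    · rw [neg_div]
      congr 2
      ring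
  -- unfold nu in the integrand
  have hnu : ∀ x : ℝ, nu f (φ*x + β) s₁ * E₂ x
      = (Real.sqrt (2*Real.pi*s₁))⁻¹ *
        ∫ y : ℝ, f (Real.exp y) * E₁ x y * E₂ x := by
    intro x
    rw [nu, mul_assoc]
    congr 1
    exact (integral_mul_const _ _).symm
  -- integrability for Fubini
  set ε := min (1/(4*s₁)) (1/(4*s₂*(1+4*φ^2))) with hε_def
  have hφ : (0:ℝ) < 1 + 4*φ^2 := by positivity
  have hε : 0 < ε := lt_min (by positivity) (by positivity)
  have hε1 : ε ≤ 1/(4*s₁) := min_le_left _ _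
  have hε2 : ε ≤ 1/(4*s₂*(1+4*φ^2)) := min_le_right _ _
  set M : ℝ := ε*(4*(β - s₁/2)^2 + 2*(1+4*φ^2)*(z - s₂/2)^2) with hM
  have hInt : Integrable (Function.uncurry fun x y : ℝ =>
      f (Real.exp y) * E₁ x y * E₂ x) (volume.prod volume) := by
    apply Integrable.mono'
      (((integrable_exp_neg_mul_sq hε).const_mul (C * Real.exp M)).mul_prod
        (nu_aux_poly_gauss hε k))
    · apply Measurable.aestronglyMeasurable
      have : (Function.uncurry fun x y : ℝ => f (Real.exp y) * E₁ x y * E₂ x)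
          = fun q : ℝ × ℝ => f (Real.exp q.2) * E₁ q.1 q.2 * E₂ q.1 := rfl
      rw [this, hE₁, hE₂]
      apply Measurable.mul
      apply Measurable.mul
      · exact hf.comp (Real.measurable_exp.comp measurable_snd)
      · fun_prop
      · fun_prop
    · filter_upwards with q
      obtain ⟨x, y⟩ := q
      have hq : Function.uncurry (fun x y : ℝ => f (Real.exp y) * E₁ x y * E₂ x) (x, y)
          = f (Real.exp y) * E₁ x y * E₂ x := rfl
      rw [hq, hE₁, hE₂]
      simp only
      rw [Real.norm_eq_abs, abs_mul, abs_mul, Real.abs_exp, Real.abs_exp]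
      have hfb := hCk y
      have hexp : Real.exp (-(y - (φ*x + β) + s₁/2)^2 / (2*s₁)) *
            Real.exp (-(x - z + s₂/2)^2 / (2*s₂))
          ≤ Real.exp M * (Real.exp (-ε * x^2) * Real.exp (-ε * y^2)) := by
        rw [← Real.exp_add, ← Real.exp_add, ← Real.exp_add]
        apply Real.exp_le_exp.2
        have hq2 := nu_aux_quad φ s₁ s₂ ε (β - s₁/2) (z - s₂/2) y x h1 h2 hε hε1 hε2
        have e1 : y - φ*x - (β - s₁/2) = y - (φ*x + β) + s₁/2 := by ring
        have e2 : x - (z - s₂/2) = x - z + s₂/2 := by ring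
        rw [e1, e2] at hq2
        have : -(y - (φ*x + β) + s₁/2)^2 / (2*s₁) + -(x - z + s₂/2)^2 / (2*s₂)
            = -((y - (φ*x + β) + s₁/2)^2/(2*s₁) + (x - z + s₂/2)^2/(2*s₂)) := by ring
        rw [this, hM]
        linarith
      calc |f (Real.exp y)| * Real.exp (-(y - (φ*x + β) + s₁/2)^2 / (2*s₁)) *
            Real.exp (-(x - z + s₂/2)^2 / (2*s₂))
          ≤ (C * (1 + |y|)^k) * (Real.exp (-(y - (φ*x + β) + s₁/2)^2 / (2*s₁)) *
              Real.exp (-(x - z + s₂/2)^2 / (2*s₂))) := by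
            rw [mul_assoc]
            exact mul_le_mul_of_nonneg_right hfb (by positivity)
        _ ≤ (C * (1 + |y|)^k) * (Real.exp M * (Real.exp (-ε * x^2) * Real.exp (-ε * y^2))) := by
            apply mul_le_mul_of_nonneg_left hexp (by positivity)
        _ = (C * Real.exp M * Real.exp (-ε * x^2)) * ((1 + |y|)^k * Real.exp (-ε * y^2)) := by
            ring
  -- now compute
  simp_rw [show ∀ x : ℝ, nu f (φ*x + β) s₁ * Real.exp (-(x - z + s₂/2)^2 / (2*s₂)) = _ from hnu]
  rw [integral_const_mul, integral_integral_swap hInt]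
  have hswap : ∀ y : ℝ, (∫ x : ℝ, f (Real.exp y) * E₁ x y * E₂ x)
      = Real.sqrt (2*Real.pi*s₁*s₂ / (s₁ + φ^2*s₂)) *
        (f (Real.exp y) *
          Real.exp (-(y - (φ*z + β + (φ^2 - φ)/2 * s₂) + (s₁ + φ^2*s₂)/2)^2
            / (2*(s₁ + φ^2*s₂)))) := by
    intro y
    have : ∀ x : ℝ, f (Real.exp y) * E₁ x y * E₂ x = f (Real.exp y) * (E₁ x y * E₂ x) := by
      intro x; ring
    simp_rw [this]
    rw [integral_const_mul, hinner y, mul_left_comm]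
  simp_rw [hswap]
  rw [integral_const_mul, nu]
  rw [show (2*(s₁ + φ^2*s₂) : ℝ) = 2*(s₁ + φ^2*s₂) from rfl]
  -- collapse constants
  have hconst : (Real.sqrt (2*Real.pi*s₂))⁻¹ * ((Real.sqrt (2*Real.pi*s₁))⁻¹ *
      Real.sqrt (2*Real.pi*s₁*s₂ / (s₁ + φ^2*s₂)))
      = (Real.sqrt (2*Real.pi*(s₁ + φ^2*s₂)))⁻¹ := by
    have ha : (0:ℝ) < 2*Real.pi*s₁ := by positivity
    have hb : (0:ℝ) < 2*Real.pi*s₂ := by positivity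
    have hc : (0:ℝ) < 2*Real.pi*(s₁ + φ^2*s₂) := by positivity
    have h₀ : (2*Real.pi*s₁*s₂ / (s₁ + φ^2*s₂) : ℝ)
        = (2*Real.pi*s₁) * (2*Real.pi*s₂) / (2*Real.pi*(s₁ + φ^2*s₂)) := by
      field_simp
    rw [h₀, Real.sqrt_div (by positivity), Real.sqrt_mul ha.le]
    have hsa := Real.sqrt_pos.2 ha
    have hsb := Real.sqrt_pos.2 hb
    have hsc := Real.sqrt_pos.2 hc
    field_simp
  rw [← mul_assoc, ← mul_assoc, mul_assoc (Real.sqrt (2*Real.pi*s₂))⁻¹, hconst]
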